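/- Cordes inequality: if A and B are positive bounded linear operators on a separable Hilbert space and 0 ≤ s ≤ 1, then ‖A^s B^s‖ ≤ ‖A B‖^s. -/

import Mathlib

set_option synthInstance.maxHeartbeats 1000000
set_option maxHeartbeats 1000000
set_option linter.unusedVariables false
set_option linter.unusedSectionVars false
set_option linter.unnecessarySimpa false

open NormedSpace Complex Complex.HadamardThreeLines Filter Topology
open scoped NNReal

namespace CordesAux

variable {H : Type*} [NormedAddCommGroup H] [InnerProductSpace ℂ H] [CompleteSpace H]
  [Nontrivial H]

local notation "E" => H →L[ℂ] H

noncomputable instance instNormedAlgebraRatOp : NormedAlgebra ℚ (H →L[ℂ] H) :=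
  NormedAlgebra.restrictScalars ℚ ℂ (H →L[ℂ] H)



-- basic real fact
lemma real_rpow_sub_le {x e s : ℝ} (hx : 0 ≤ x) (he : 0 ≤ e) (hs0 : 0 ≤ s) (hs1 : s ≤ 1) :
    (x + e) ^ s - x ^ s ≤ e ^ s := by
  have h := NNReal.rpow_add_le_add_rpow (x.toNNReal) (e.toNNReal) hs0 hs1
  have := NNReal.coe_le_coe.2 h
  push_cast at this
  rw [Real.coe_toNNReal _ hx, Real.coe_toNNReal _ he] at this
  linarith

lemma rpow_le_max {c s : ℝ} (hc : 0 ≤ c) (hs0 : 0 ≤ s) (hs1 : s ≤ 1) :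
    c ^ s ≤ max 1 c := by
  rcases le_total c 1 with h | h
  · exact le_max_of_le_left (Real.rpow_le_one hc h hs0)
  · refine le_max_of_le_right ?_
    calc c ^ s ≤ c ^ (1 : ℝ) := Real.rpow_le_rpow_of_exponent_le h hs1
    _ = c := Real.rpow_one c

-- rpow as real cfc

lemma one_nonneg : (0 : E) ≤ 1 := by
  simpa using star_mul_self_nonneg (1 : E)

lemma rpow_eq_cfc_real (A : E) (hA : 0 ≤ A) (s : ℝ) :
    CFC.rpow A s = cfc (fun x : ℝ => x ^ s) A := by
  rw [show CFC.rpow A s = cfc (fun x : ℝ≥0 => x ^ s) A from rfl, cfc_nnreal_eq_real _ A hA]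
  refine cfc_congr fun x hx => ?_
  have hx0 : 0 ≤ x := spectrum_nonneg_of_nonneg hA hx
  simp [NNReal.coe_rpow, Real.coe_toNNReal _ hx0]

lemma norm_rpow_le (A : E) (hA : 0 ≤ A) {s : ℝ} (hs : 0 ≤ s) :
    ‖CFC.rpow A s‖ ≤ ‖A‖ ^ s := by
  rw [rpow_eq_cfc_real A hA s]
  refine norm_cfc_le (Real.rpow_nonneg (norm_nonneg A) s) fun x hx => ?_
  have hx0 : 0 ≤ x := spectrum_nonneg_of_nonneg hA hx
  have hx1 : x ≤ ‖A‖ := (le_abs_self x).trans (spectrum.norm_le_norm_of_mem hx)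
  rw [Real.norm_eq_abs, _root_.abs_of_nonneg (Real.rpow_nonneg hx0 s)]
  exact Real.rpow_le_rpow hx0 hx1 hs

lemma norm_rpow_sub_rpow_le (A : E) (hA : 0 ≤ A) {e s : ℝ} (he : 0 ≤ e) (hs0 : 0 < s)
    (hs1 : s ≤ 1) :
    ‖CFC.rpow (A + e • 1) s - CFC.rpow A s‖ ≤ e ^ s := by
  have h1 : (0 : E) ≤ 1 := one_nonneg
  have hAe : 0 ≤ A + e • 1 := by
    calc (0 : E) = 0 + 0 := by simp
    _ ≤ A + e • 1 := add_le_add hA (smul_nonneg he h1)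
  have hcont : ContinuousOn (fun x : ℝ => x ^ s) (Set.univ : Set ℝ) :=
    (Real.continuous_rpow_const hs0.le).continuousOn
  have hfc : Continuous (fun x : ℝ => x + e) := by continuity
  have hgc : Continuous (fun x : ℝ => x ^ s) := Real.continuous_rpow_const hs0.le
  have hkey : A + e • 1 = cfc (fun x : ℝ => x + e) A := by
    rw [cfc_add_const e (fun x : ℝ => x) A (hf := continuousOn_id), cfc_id' ℝ A,
      Algebra.algebraMap_eq_smul_one]
  rw [rpow_eq_cfc_real _ hAe, rpow_eq_cfc_real A hA, hkey,
    ← cfc_comp (fun x : ℝ => x ^ s) (fun x : ℝ => x + e) A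
      (hg := hgc.continuousOn) (hf := hfc.continuousOn),
    ← cfc_sub _ _ A
      (hf := (hgc.comp hfc).continuousOn)
      (hg := hgc.continuousOn)]
  refine norm_cfc_le (Real.rpow_nonneg he s) fun x hx => ?_
  have hx0 : 0 ≤ x := spectrum_nonneg_of_nonneg hA hx
  have hmono : x ^ s ≤ (x + e) ^ s := Real.rpow_le_rpow hx0 (by linarith) hs0.le
  rw [Real.norm_eq_abs, Function.comp_apply, _root_.abs_of_nonneg (by linarith)]
  exact real_rpow_sub_le hx0 he hs0.le hs1

lemma spec_pos (T : E) (hT : 0 ≤ T) (e : ℝ) (he : 0 < e) : ∀ x ∈ spectrum ℝ (T + e • 1), 0 < x := by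
  intro x hx
  have hkey : T + e • 1 = cfc (fun x : ℝ => x + e) T := by
    rw [cfc_add_const e (fun x : ℝ => x) T (hf := continuousOn_id), cfc_id' ℝ T,
      Algebra.algebraMap_eq_smul_one]
  rw [hkey, cfc_map_spectrum (fun x : ℝ => x + e) T
    (hf := (continuous_id.add continuous_const).continuousOn)] at hx
  obtain ⟨y, hy, rfl⟩ := hx
  have : 0 ≤ y := spectrum_nonneg_of_nonneg hT hy
  show 0 < y + e
  linarith

lemma Te_nonneg (T : E) (hT : 0 ≤ T) (e : ℝ) (he : 0 < e) : (0 : E) ≤ T + e • 1 := by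
  have h1 : (0 : E) ≤ 1 := by simpa using star_mul_self_nonneg (1 : E)
  calc (0 : E) = 0 + 0 := by simp
  _ ≤ T + e • 1 := add_le_add hT (smul_nonneg he.le h1)

lemma L_selfAdjoint (T : E) (e : ℝ) : IsSelfAdjoint (cfc Real.log (T + e • 1)) := cfc_predicate _ _

lemma exp_smul_log (T : E) (hT : 0 ≤ T) (e : ℝ) (he : 0 < e) (r : ℝ) :
    NormedSpace.exp (r • cfc Real.log (T + e • 1)) = CFC.rpow (T + e • 1) r := by
  set Te : E := T + e • 1 with hTe
  have hsp := spec_pos T hT e he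
  have hTe0 : (0 : E) ≤ Te := Te_nonneg T hT e he
  have hlogc : ContinuousOn Real.log (spectrum ℝ Te) :=
    Real.continuousOn_log.mono (fun x hx => by simpa using (hsp x hx).ne')
  have h1 : r • cfc Real.log Te = cfc (fun x : ℝ => r • Real.log x) Te :=
    (cfc_smul r Real.log Te (hf := hlogc)).symm
  rw [h1, ← CFC.real_exp_eq_normedSpace_exp (cfc_predicate _ _),
    ← cfc_comp Real.exp (fun x : ℝ => r • Real.log x) Te
      (hg := Real.continuous_exp.continuousOn)
      (hf := by exact (hlogc.const_smul r :
        ContinuousOn (fun x : ℝ => r • Real.log x) (spectrum ℝ Te))),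
    rpow_eq_cfc_real Te hTe0]
  refine cfc_congr fun x hx => ?_
  have hx0 : 0 < x := hsp x hx
  simp only [Function.comp_apply, smul_eq_mul]
  rw [Real.rpow_def_of_pos hx0, mul_comm]

lemma exp_one_smul_log (T : E) (hT : 0 ≤ T) (e : ℝ) (he : 0 < e) : NormedSpace.exp ((1 : ℝ) • cfc Real.log (T + e • 1)) = T + e • 1 := by
  rw [exp_smul_log T hT e he]
  exact CFC.rpow_one _ (Te_nonneg T hT e he)

lemma coe_smul_op (r : ℝ) (x : E) : (r : ℂ) • x = r • x := by
  rw [show ((r : ℂ)) = algebraMap ℝ ℂ r from rfl, algebraMap_smul]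

lemma exp_complex_eq_real (x : E) : NormedSpace.exp x = NormedSpace.exp x :=
  rfl

lemma norm_exp_smul_I_le (L : E) (hL : IsSelfAdjoint L) (t : ℝ) :
    ‖NormedSpace.exp (((t : ℂ) * I) • L)‖ ≤ 1 := by
  set u : E := NormedSpace.exp (((t : ℂ) * I) • L) with hu
  have hstar : star u = NormedSpace.exp ((-((t : ℂ) * I)) • L) := by
    rw [hu, star_exp]
    congr 1
    rw [star_smul, hL.star_eq]
    congr 1
    simp [Complex.ext_iff]
  have hcomm : Commute ((-((t : ℂ) * I)) • L) ((((t : ℂ) * I)) • L) :=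
    ((Commute.refl L).smul_left _).smul_right _
  have hmul : star u * u = 1 := by
    rw [hstar, hu, ← exp_add_of_commute hcomm]
    simp
  have hcs : ‖star u * u‖ = ‖u‖ * ‖u‖ := CStarRing.norm_star_mul_self
  have h1 : ‖(1 : E)‖ ≤ 1 := ContinuousLinearMap.norm_id_le
  rw [hmul] at hcs
  nlinarith [norm_nonneg u]

lemma exp_smul_split (L : E) (z : ℂ) :
    NormedSpace.exp (z • L) = NormedSpace.exp (((z.im : ℂ) * I) • L) * NormedSpace.exp (((z.re : ℂ)) • L) := by
  have hz : z = (z.im : ℂ) * I + (z.re : ℂ) := by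
    rw [add_comm]; exact (Complex.re_add_im z).symm
  rw [← exp_add_of_commute (((Commute.refl L).smul_left _).smul_right _), ← add_smul, ← hz]

lemma exp_smul_split' (L : E) (z : ℂ) :
    NormedSpace.exp (z • L) = NormedSpace.exp (((z.re : ℂ)) • L) * NormedSpace.exp (((z.im : ℂ) * I) • L) := by
  have hz : z = (z.re : ℂ) + (z.im : ℂ) * I := (Complex.re_add_im z).symm
  rw [← exp_add_of_commute (((Commute.refl L).smul_left _).smul_right _), ← add_smul, ← hz]

lemma cordes_reg (A B : E) (hA : 0 ≤ A) (hB : 0 ≤ B) {e : ℝ} (he : 0 < e)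
    {s : ℝ} (hs0 : 0 ≤ s) (hs1 : s ≤ 1) :
    ‖CFC.rpow (A + e • 1) s * CFC.rpow (B + e • 1) s‖
      ≤ ‖(A + e • 1) * (B + e • 1)‖ ^ s := by
  set Ae : E := A + e • 1 with hAe
  set Be : E := B + e • 1 with hBe
  set LA : E := cfc Real.log Ae with hLA
  set LB : E := cfc Real.log Be with hLB
  have hLAsa : IsSelfAdjoint LA := cfc_predicate _ _
  have hLBsa : IsSelfAdjoint LB := cfc_predicate _ _
  have hAe0 : (0 : E) ≤ Ae := Te_nonneg A hA e he
  have hBe0 : (0 : E) ≤ Be := Te_nonneg B hB e he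
  set f : ℂ → E := fun z => NormedSpace.exp (z • LA) * NormedSpace.exp (z • LB) with hf
  have hexp_re : ∀ (L T : E), 0 ≤ T → L = cfc Real.log (T + e • 1) →
      ∀ r : ℝ, 0 ≤ r → r ≤ 1 → ‖NormedSpace.exp ((r : ℂ) • L)‖ ≤ max 1 ‖T + e • 1‖ := by
    intro L T hT hL r hr0 hr1
    rw [coe_smul_op, exp_complex_eq_real, hL, exp_smul_log T hT e he]
    exact (norm_rpow_le _ (Te_nonneg T hT e he) hr0).trans
      (rpow_le_max (norm_nonneg _) hr0 hr1)
  have hstrip : ∀ (L T : E), 0 ≤ T → L = cfc Real.log (T + e • 1) → IsSelfAdjoint L →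
      ∀ z : ℂ, 0 ≤ z.re → z.re ≤ 1 → ‖NormedSpace.exp (z • L)‖ ≤ max 1 ‖T + e • 1‖ := by
    intro L T hT hL hLsa z hz0 hz1
    rw [exp_smul_split L z]
    calc ‖NormedSpace.exp ((↑z.im * I) • L) * NormedSpace.exp ((↑z.re : ℂ) • L)‖
        ≤ ‖NormedSpace.exp ((↑z.im * I) • L)‖ * ‖NormedSpace.exp ((↑z.re : ℂ) • L)‖ := norm_mul_le _ _
      _ ≤ 1 * max 1 ‖T + e • 1‖ :=
          mul_le_mul (norm_exp_smul_I_le L hLsa z.im)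
            (hexp_re L T hT hL z.re hz0 hz1) (norm_nonneg _) zero_le_one
      _ = max 1 ‖T + e • 1‖ := one_mul _
  have key := norm_le_interp_of_mem_verticalClosedStrip₀₁' f
    (z := (s : ℂ)) (a := 1) (b := ‖Ae * Be‖)
    (by simpa [verticalClosedStrip] using ⟨hs0, hs1⟩)
    (by
      apply Differentiable.diffContOnCl
      exact fun z => ((hasDerivAt_exp_smul_const (𝕂 := ℂ) LA z).differentiableAt.mul
        (hasDerivAt_exp_smul_const (𝕂 := ℂ) LB z).differentiableAt))
    (by
      refine ⟨max 1 ‖Ae‖ * max 1 ‖Be‖, fun r hr => ?_⟩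
      obtain ⟨z, hz, rfl⟩ := hr
      simp only [Function.comp_apply, hf]
      calc ‖NormedSpace.exp (z • LA) * NormedSpace.exp (z • LB)‖
          ≤ ‖NormedSpace.exp (z • LA)‖ * ‖NormedSpace.exp (z • LB)‖ := norm_mul_le _ _
        _ ≤ max 1 ‖Ae‖ * max 1 ‖Be‖ :=
            mul_le_mul (hstrip LA A hA hLA hLAsa z hz.1 hz.2)
              (hstrip LB B hB hLB hLBsa z hz.1 hz.2) (norm_nonneg _)
              (le_max_left 1 ‖Ae‖ |>.trans' zero_le_one))
    (by
      intro z hz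
      have hzre : z.re = 0 := hz
      simp only [hf]
      rw [exp_smul_split LA z, exp_smul_split LB z, hzre]
      simp only [Complex.ofReal_zero, zero_smul, NormedSpace.exp_zero, mul_one]
      calc ‖NormedSpace.exp ((↑z.im * I) • LA) * NormedSpace.exp ((↑z.im * I) • LB)‖
          ≤ ‖NormedSpace.exp ((↑z.im * I) • LA)‖ * ‖NormedSpace.exp ((↑z.im * I) • LB)‖ := norm_mul_le _ _
        _ ≤ 1 * 1 :=
            mul_le_mul (norm_exp_smul_I_le LA hLAsa z.im)
              (norm_exp_smul_I_le LB hLBsa z.im) (norm_nonneg _) zero_le_one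
        _ = 1 := one_mul 1)
    (by
      intro z hz
      have hzre : z.re = 1 := hz
      simp only [hf]
      rw [exp_smul_split LA z, exp_smul_split' LB z, hzre]
      have hexpA : NormedSpace.exp (((1 : ℝ) : ℂ) • LA) = Ae := by
        rw [coe_smul_op, exp_complex_eq_real, hLA, exp_smul_log A hA e he]
        exact CFC.rpow_one _ hAe0
      have hexpB : NormedSpace.exp (((1 : ℝ) : ℂ) • LB) = Be := by
        rw [coe_smul_op, exp_complex_eq_real, hLB, exp_smul_log B hB e he]
        exact CFC.rpow_one _ hBe0
      rw [hexpA, hexpB, mul_assoc, ← mul_assoc Ae]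
      calc ‖NormedSpace.exp ((↑z.im * I) • LA) * (Ae * Be * NormedSpace.exp ((↑z.im * I) • LB))‖
          ≤ ‖NormedSpace.exp ((↑z.im * I) • LA)‖ * (‖Ae * Be‖ * ‖NormedSpace.exp ((↑z.im * I) • LB)‖) :=
            (norm_mul_le _ _).trans (by
              refine mul_le_mul_of_nonneg_left ?_ (norm_nonneg _)
              exact norm_mul_le _ _)
        _ ≤ 1 * (‖Ae * Be‖ * 1) :=
            mul_le_mul (norm_exp_smul_I_le LA hLAsa z.im)
              (mul_le_mul_of_nonneg_left (norm_exp_smul_I_le LB hLBsa z.im)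
                (norm_nonneg _))
              (mul_nonneg (norm_nonneg _) (norm_nonneg _)) zero_le_one
        _ = ‖Ae * Be‖ := by ring)
  have hfs : f (s : ℂ) = CFC.rpow Ae s * CFC.rpow Be s := by
    simp only [hf]
    rw [coe_smul_op, coe_smul_op, exp_complex_eq_real, exp_complex_eq_real, hLA, hLB,
      exp_smul_log A hA e he, exp_smul_log B hB e he]
  rw [hfs] at key
  have hinterp : (1 : ℝ) ^ (1 - ((s : ℂ)).re) * ‖Ae * Be‖ ^ ((s : ℂ)).re
      = ‖Ae * Be‖ ^ s := by
    simp [Complex.ofReal_re]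
  rw [hinterp] at key
  exact key

lemma cordes_main (A B : E) (hA : 0 ≤ A) (hB : 0 ≤ B) {s : ℝ} (hs0 : 0 < s) (hs1 : s ≤ 1) :
    ‖CFC.rpow A s * CFC.rpow B s‖ ≤ ‖A * B‖ ^ s := by
  have hev : ∀ e : ℝ, 0 < e → ‖CFC.rpow A s * CFC.rpow B s‖
      ≤ e ^ s * (‖B‖ ^ s + (‖A‖ + e) ^ s) + (‖A * B‖ + e * (‖A‖ + ‖B‖ + e)) ^ s := by
    intro e he
    set Ae : E := A + e • 1 with hAe
    set Be : E := B + e • 1 with hBe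
    have hnAe : ‖Ae‖ ≤ ‖A‖ + e := by
      calc ‖Ae‖ ≤ ‖A‖ + ‖e • (1 : E)‖ := norm_add_le _ _
      _ ≤ ‖A‖ + e := by
          rw [norm_smul, Real.norm_eq_abs, abs_of_pos he]
          have h1 : ‖(1 : E)‖ ≤ 1 := ContinuousLinearMap.norm_id_le
          nlinarith
    have hprod : Ae * Be = A * B + e • B + e • A + (e * e) • 1 := by
      rw [hAe, hBe]
      simp only [mul_add, add_mul, smul_mul_assoc, mul_smul_comm, mul_one, one_mul, smul_smul, smul_add]
      abel
    have hnprod : ‖Ae * Be‖ ≤ ‖A * B‖ + e * (‖A‖ + ‖B‖ + e) := by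
      rw [hprod]
      have h1 : ‖(1 : E)‖ ≤ 1 := ContinuousLinearMap.norm_id_le
      calc ‖A * B + e • B + e • A + (e * e) • 1‖
          ≤ ‖A * B + e • B + e • A‖ + ‖(e * e) • (1:E)‖ := norm_add_le _ _
        _ ≤ (‖A * B + e • B‖ + ‖e • A‖) + ‖(e * e) • (1:E)‖ := by
            gcongr; exact norm_add_le _ _
        _ ≤ ((‖A * B‖ + ‖e • B‖) + ‖e • A‖) + ‖(e * e) • (1:E)‖ := by
            gcongr; exact norm_add_le _ _
        _ ≤ ‖A * B‖ + e * (‖A‖ + ‖B‖ + e) := by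
            rw [norm_smul, norm_smul, norm_smul, Real.norm_eq_abs, Real.norm_eq_abs,
              abs_of_pos he, abs_of_pos (mul_pos he he)]
            nlinarith [norm_nonneg (1 : E)]
    have hdecomp : CFC.rpow A s * CFC.rpow B s
        = (CFC.rpow A s - CFC.rpow Ae s) * CFC.rpow B s
          + CFC.rpow Ae s * (CFC.rpow B s - CFC.rpow Be s)
          + CFC.rpow Ae s * CFC.rpow Be s := by
      rw [mul_sub, sub_mul]; abel
    rw [hdecomp]
    have d1 : ‖CFC.rpow A s - CFC.rpow Ae s‖ ≤ e ^ s := by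
      rw [norm_sub_rev]; exact norm_rpow_sub_rpow_le A hA he.le hs0 hs1
    have d2 : ‖CFC.rpow B s - CFC.rpow Be s‖ ≤ e ^ s := by
      rw [norm_sub_rev]; exact norm_rpow_sub_rpow_le B hB he.le hs0 hs1
    have hTe : (0 : E) ≤ Ae := by
      have h1 : (0 : E) ≤ 1 := by simpa using star_mul_self_nonneg (1 : E)
      calc (0 : E) = 0 + 0 := by simp
      _ ≤ Ae := add_le_add hA (smul_nonneg he.le h1)
    have hnB : ‖CFC.rpow B s‖ ≤ ‖B‖ ^ s := norm_rpow_le B hB hs0.le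
    have hnAes : ‖CFC.rpow Ae s‖ ≤ (‖A‖ + e) ^ s :=
      (norm_rpow_le Ae hTe hs0.le).trans (Real.rpow_le_rpow (norm_nonneg _) hnAe hs0.le)
    calc ‖(CFC.rpow A s - CFC.rpow Ae s) * CFC.rpow B s
          + CFC.rpow Ae s * (CFC.rpow B s - CFC.rpow Be s)
          + CFC.rpow Ae s * CFC.rpow Be s‖
        ≤ ‖(CFC.rpow A s - CFC.rpow Ae s) * CFC.rpow B s‖
          + ‖CFC.rpow Ae s * (CFC.rpow B s - CFC.rpow Be s)‖
          + ‖CFC.rpow Ae s * CFC.rpow Be s‖ := norm_add₃_le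
      _ ≤ e ^ s * ‖B‖ ^ s + (‖A‖ + e) ^ s * e ^ s
          + (‖A * B‖ + e * (‖A‖ + ‖B‖ + e)) ^ s := by
          gcongr
          · exact (norm_mul_le _ _).trans (mul_le_mul d1 hnB (norm_nonneg _) (by positivity))
          · exact (norm_mul_le _ _).trans
              (mul_le_mul hnAes d2 (norm_nonneg _) (by positivity))
          · exact (cordes_reg A B hA hB he hs0.le hs1).trans
              (Real.rpow_le_rpow (norm_nonneg _) hnprod hs0.le)
      _ = e ^ s * (‖B‖ ^ s + (‖A‖ + e) ^ s)
          + (‖A * B‖ + e * (‖A‖ + ‖B‖ + e)) ^ s := by ring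
  have hcont : Continuous (fun e : ℝ =>
      e ^ s * (‖B‖ ^ s + (‖A‖ + e) ^ s) + (‖A * B‖ + e * (‖A‖ + ‖B‖ + e)) ^ s) := by
    have h1 : Continuous (fun e : ℝ => e ^ s) := Real.continuous_rpow_const hs0.le
    fun_prop
  have hlim : Tendsto (fun e : ℝ =>
      e ^ s * (‖B‖ ^ s + (‖A‖ + e) ^ s) + (‖A * B‖ + e * (‖A‖ + ‖B‖ + e)) ^ s)
      (𝓝[>] (0:ℝ)) (𝓝 (‖A * B‖ ^ s)) := by
    have := (hcont.tendsto 0).mono_left (nhdsWithin_le_nhds (s := Set.Ioi (0:ℝ)))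
    simpa [Real.zero_rpow hs0.ne'] using this
  exact ge_of_tendsto hlim (eventually_nhdsWithin_of_forall (fun e he => hev e he))


end CordesAux

/-- Cordes inequality: if `A`, `B` are positive bounded operators on a separable Hilbert space
and `0 ≤ s ≤ 1`, then `‖A^s B^s‖ ≤ ‖A B‖^s`. -/
theorem stmt_8 {H : Type*} [NormedAddCommGroup H] [InnerProductSpace ℂ H] [CompleteSpace H]
    [TopologicalSpace.SeparableSpace H]
    (A B : H →L[ℂ] H) (hA : 0 ≤ A) (hB : 0 ≤ B) (s : ℝ) (hs0 : 0 ≤ s) (hs1 : s ≤ 1) :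
    ‖CFC.rpow A s * CFC.rpow B s‖ ≤ ‖A * B‖ ^ s := by
  rcases subsingleton_or_nontrivial H with hH | hH
  · have h0 : CFC.rpow A s * CFC.rpow B s = 0 := Subsingleton.elim _ _
    rw [h0, norm_zero]
    exact Real.rpow_nonneg (norm_nonneg _) s
  · rcases eq_or_lt_of_le hs0 with rfl | hs
    · rw [show CFC.rpow A (0:ℝ) = 1 from CFC.rpow_zero A hA,
        show CFC.rpow B (0:ℝ) = 1 from CFC.rpow_zero B hB, mul_one, Real.rpow_zero]
      exact ContinuousLinearMap.norm_id_le
    · exact CordesAux.cordes_main A B hA hB hs hs1
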